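/- Let c₁ > 2 and c₃ ∈ ℝ, and define k : ℝ → ℝ by k(s) = 2/(c₁ + √(c₁² − 4)·sin(2(c₃ + s))). Then the denominator c₁ + √(c₁² − 4)·sin(2(c₃ + s)) is strictly positive for all s, the function k is positive and non-constant, and k satisfies (3/4)·k'(s)² − (1/2)·k''(s)·k(s) − k(s)⁴ + k(s)² = 0 for every s ∈ ℝ. -/

import Mathlib

/-- On the round sphere (K = 1), `k(s) = 2/(c₁ + √(c₁²−4) sin 2(c₃+s))` with `c₁ > 2`
has positive denominator, is positive, non-constant and satisfies
`(3/4)k'² − (1/2)k'' k − k⁴ + k² = 0`. -/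
theorem stmt_6 (c₁ c₃ : ℝ) (hc₁ : 2 < c₁)
    (k : ℝ → ℝ)
    (hk : k = fun s => 2 / (c₁ + Real.sqrt (c₁ ^ 2 - 4) * Real.sin (2 * (c₃ + s)))) :
    (∀ s : ℝ, 0 < c₁ + Real.sqrt (c₁ ^ 2 - 4) * Real.sin (2 * (c₃ + s))) ∧
    (∀ s, 0 < k s) ∧ (∃ s t : ℝ, k s ≠ k t) ∧
      ∀ s, 3 / 4 * (deriv k s) ^ 2 - 1 / 2 * deriv (deriv k) s * k s
        - (k s) ^ 4 + (k s) ^ 2 = 0 := by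
  set a : ℝ := Real.sqrt (c₁ ^ 2 - 4) with ha
  have hsub : (0:ℝ) < c₁ ^ 2 - 4 := by nlinarith
  have ha2 : a ^ 2 = c₁ ^ 2 - 4 := Real.sq_sqrt (le_of_lt hsub)
  have ha0 : 0 ≤ a := Real.sqrt_nonneg _
  have hapos : 0 < a := by
    rcases ha0.lt_or_eq with h | h
    · exact h
    · exfalso; nlinarith [ha2, h.symm]
  have halt : a < c₁ := by nlinarith [ha2, ha0]
  set d : ℝ → ℝ := fun s => c₁ + a * Real.sin (2 * (c₃ + s)) with hd
  have hdpos : ∀ s, 0 < d s := by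
    intro s
    have h1 := Real.neg_one_le_sin (2 * (c₃ + s))
    simp only [hd]
    nlinarith
  have hdne : ∀ s, d s ≠ 0 := fun s => (hdpos s).ne'
  -- derivative of inner function
  have hinner : ∀ s : ℝ, HasDerivAt (fun s : ℝ => 2 * (c₃ + s)) 2 s := by
    intro s
    simpa using ((hasDerivAt_id s).const_add c₃).const_mul (2:ℝ)
  have hD : ∀ s : ℝ, HasDerivAt d (2 * a * Real.cos (2 * (c₃ + s))) s := by
    intro s
    have := ((Real.hasDerivAt_sin (2 * (c₃ + s))).comp s (hinner s)).const_mul a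
    have := this.const_add c₁
    refine this.congr_deriv ?_
    ring
  have hDer : ∀ s : ℝ, HasDerivAt (fun s => 2 * a * Real.cos (2 * (c₃ + s)))
      (-(4 * a * Real.sin (2 * (c₃ + s)))) s := by
    intro s
    have := ((Real.hasDerivAt_cos (2 * (c₃ + s))).comp s (hinner s)).const_mul (2 * a)
    refine this.congr_deriv ?_
    ring
  have hkd : k = fun s => 2 / d s := hk
  have hk' : ∀ s : ℝ, HasDerivAt k (-(2 * (2 * a * Real.cos (2 * (c₃ + s)))) / (d s) ^ 2) s := by
    intro s
    rw [hkd]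
    have := (hasDerivAt_const s (2:ℝ)).div (hD s) (hdne s)
    refine this.congr_deriv ?_
    ring
  have hderivk : deriv k = fun s => -(2 * (2 * a * Real.cos (2 * (c₃ + s)))) / (d s) ^ 2 := by
    funext s; exact (hk' s).deriv
  have hk'' : ∀ s : ℝ, HasDerivAt (deriv k)
      ((-(2 * (-(4 * a * Real.sin (2 * (c₃ + s))))) * (d s) ^ 2
        - -(2 * (2 * a * Real.cos (2 * (c₃ + s)))) * (2 * d s * (2 * a * Real.cos (2 * (c₃ + s)))))
        / ((d s) ^ 2) ^ 2) s := by
    intro s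
    rw [hderivk]
    have hnum : HasDerivAt (fun s : ℝ => -(2 * (2 * a * Real.cos (2 * (c₃ + s)))))
        (-(2 * (-(4 * a * Real.sin (2 * (c₃ + s)))))) s := by
      exact ((hDer s).const_mul (2:ℝ)).neg
    have hden : HasDerivAt (fun s : ℝ => (d s) ^ 2) (2 * d s * (2 * a * Real.cos (2 * (c₃ + s)))) s := by
      have := (hD s).pow 2
      refine this.congr_deriv ?_
      ring
    have hne : (d s) ^ 2 ≠ 0 := pow_ne_zero _ (hdne s)
    exact hnum.div hden hne
  refine ⟨hdpos, ?_, ?_, ?_⟩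
  · intro s
    rw [hkd]
    exact div_pos two_pos (hdpos s)
  · -- non-constant
    refine ⟨Real.pi / 4 - c₃, -(Real.pi / 4) - c₃, ?_⟩
    rw [hkd]
    simp only [hd]
    have e1 : 2 * (c₃ + (Real.pi / 4 - c₃)) = Real.pi / 2 := by ring
    have e2 : 2 * (c₃ + (-(Real.pi / 4) - c₃)) = -(Real.pi / 2) := by ring
    rw [e1, e2, Real.sin_neg, Real.sin_pi_div_two]
    have h1 : (0:ℝ) < c₁ + a * 1 := by nlinarith
    have h2 : (0:ℝ) < c₁ + a * (-1) := by nlinarith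
    intro h
    rw [div_eq_div_iff h1.ne' h2.ne'] at h
    nlinarith
  · intro s
    have hks : k s = 2 / d s := by rw [hkd]
    have hdk : deriv k s = -(2 * (2 * a * Real.cos (2 * (c₃ + s)))) / (d s) ^ 2 := by
      rw [hderivk]
    have hddk := (hk'' s).deriv
    set S := Real.sin (2 * (c₃ + s)) with hS
    set C := Real.cos (2 * (c₃ + s)) with hC
    have htrig : S ^ 2 + C ^ 2 = 1 := Real.sin_sq_add_cos_sq _
    have hds : d s = c₁ + a * S := rfl
    have hne : (c₁ + a * S) ≠ 0 := hds ▸ hdne s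
    rw [hdk, hddk, hks, hds]
    have expand :
        3 / 4 * (-(2 * (2 * a * C)) / (c₁ + a * S) ^ 2) ^ 2
          - 1 / 2 * ((-(2 * -(4 * a * S)) * (c₁ + a * S) ^ 2
              - -(2 * (2 * a * C)) * (2 * (c₁ + a * S) * (2 * a * C)))
                / (((c₁ + a * S) ^ 2) ^ 2)) * (2 / (c₁ + a * S))
          - (2 / (c₁ + a * S)) ^ 4 + (2 / (c₁ + a * S)) ^ 2
        = (-4 * a ^ 2 * (S ^ 2 + C ^ 2) + 4 * c₁ ^ 2 - 16) / (c₁ + a * S) ^ 4 := by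
      field_simp
      ring
    rw [expand, htrig, ha2]
    ring_nf
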